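/- (Bonnet–Sykora) Let G = (V, E) be a finite simple graph. The δ-sequence of G is symmetric (i.e., δ_G(i) + δ_G(|V| − i + 1) = δ_G(|V|) for all i ∈ {1, …, |V|}) if and only if G is regular. -/

import Mathlib

open Finset
open scoped Classical

/-- Number of edges of `G` with both endpoints in `A`. -/
noncomputable def edgesIn {V : Type*} [Fintype V] (G : SimpleGraph V) (A : Finset V) : ℕ :=
  (G.edgeFinset.filter (fun e => ∀ v ∈ e, v ∈ A)).card

/-- `I_G(m)`: maximum number of induced edges over all `m`-subsets. -/
noncomputable def maxEdgesIn {V : Type*} [Fintype V] (G : SimpleGraph V) (m : ℕ) : ℕ :=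
  (Finset.univ.powersetCard m).sup (edgesIn G)

/-- The `δ`-sequence of `G`. -/
noncomputable def deltaSeq {V : Type*} [Fintype V] (G : SimpleGraph V) (m : ℕ) : ℤ :=
  (maxEdgesIn G m : ℤ) - (maxEdgesIn G (m - 1) : ℤ)

/-- `G` has nested solutions. -/
def hasNS {V : Type*} [Fintype V] (G : SimpleGraph V) : Prop :=
  ∃ A : ℕ → Finset V,
    (∀ i, 1 ≤ i → i < Fintype.card V → A i ⊆ A (i + 1)) ∧
    (∀ i, 1 ≤ i → i ≤ Fintype.card V →
      (A i).card = i ∧ edgesIn G (A i) = maxEdgesIn G i)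

/-- `G` is `δ`-dense. -/
def deltaDense {V : Type*} [Fintype V] (G : SimpleGraph V) : Prop :=
  ∀ i, 2 ≤ i → i ≤ Fintype.card V → deltaSeq G i ≤ deltaSeq G (i - 1) → 2 ≤ deltaSeq G i

/-- The `d`-th cartesian power of `G`. -/
def cartPower {V : Type*} (G : SimpleGraph V) (d : ℕ) : SimpleGraph (Fin d → V) where
  Adj x y := ∃ i, G.Adj (x i) (y i) ∧ ∀ j, j ≠ i → x j = y j
  symm := by
    refine ⟨?_⟩
    rintro x y ⟨i, h, hj⟩
    exact ⟨i, h.symm, fun j hje => (hj j hje).symm⟩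
  loopless := by
    refine ⟨?_⟩
    rintro x ⟨i, h, -⟩
    exact G.loopless.irrefl _ h

/-- The initial segment `{0, …, k-1}` of `Fin N`. -/
def finSeg (N k : ℕ) : Finset (Fin N) :=
  Finset.univ.filter (fun v => (v : ℕ) < k)

/-- The set of the first `m` elements under a (strict total) order `r`. -/
noncomputable def initSeg {α : Type*} [Fintype α] (r : α → α → Prop) (m : ℕ) : Finset α :=
  Finset.univ.filter (fun u => (Finset.univ.filter (fun w => r w u)).card < m)

/-- Strict lexicographic order on tuples. -/
def lexLt {n N : ℕ} (x y : Fin n → Fin N) : Prop :=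
  ∃ i, (∀ j, j < i → x j = y j) ∧ x i < y i

/-- Strict colexicographic order on tuples. -/
def colexLt {n N : ℕ} (x y : Fin n → Fin N) : Prop :=
  ∃ i, (∀ j, i < j → x j = y j) ∧ x i < y i

/-- Strict lexicographic order on pairs. -/
def lexPair {N : ℕ} (p q : Fin N × Fin N) : Prop :=
  p.1 < q.1 ∨ (p.1 = q.1 ∧ p.2 < q.2)

/-- Strict colexicographic order on pairs. -/
def colexPair {N : ℕ} (p q : Fin N × Fin N) : Prop :=
  p.2 < q.2 ∨ (p.2 = q.2 ∧ p.1 < q.1)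

/-- A subset of `Fin M × Fin N` is compressed. -/
def IsCompressed {M N : ℕ} (A : Finset (Fin M × Fin N)) : Prop :=
  (∀ a : Fin M, ∀ y y' : Fin N, (a, y) ∈ A → y' ≤ y → (a, y') ∈ A) ∧
  (∀ b : Fin N, ∀ x x' : Fin M, (x, b) ∈ A → x' ≤ x → (x', b) ∈ A)

/-- Number of boundary edges: edges with exactly one endpoint in `A`. -/
noncomputable def edgesBd {V : Type*} [Fintype V] (G : SimpleGraph V) (A : Finset V) : ℕ :=
  (G.edgeFinset.filter (fun e => ∃ u ∈ e, ∃ v ∈ e, u ∈ A ∧ v ∉ A)).card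

section Aux
variable {V : Type*} [Fintype V] (G : SimpleGraph V)

lemma edgesIn_le_card (A : Finset V) : edgesIn G A ≤ G.edgeFinset.card :=
  Finset.card_filter_le _ _

lemma edgesIn_empty : edgesIn G (∅ : Finset V) = 0 := by
  rw [edgesIn, Finset.card_eq_zero, Finset.filter_eq_empty_iff]
  rintro e he h
  induction e with
  | _ a b => exact absurd (h a (Sym2.mem_mk_left a b)) (Finset.notMem_empty a)

lemma edgesIn_singleton (v : V) : edgesIn G {v} = 0 := by
  rw [edgesIn, Finset.card_eq_zero, Finset.filter_eq_empty_iff]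
  rintro e he h
  induction e with
  | _ a b =>
    have hadj : G.Adj a b := G.mem_edgeSet.mp (SimpleGraph.mem_edgeFinset.mp he)
    have ha := h a (Sym2.mem_mk_left a b)
    have hb := h b (Sym2.mem_mk_right a b)
    simp only [Finset.mem_singleton] at ha hb
    exact hadj.ne (ha.trans hb.symm)

lemma edgesIn_univ : edgesIn G (Finset.univ : Finset V) = G.edgeFinset.card := by
  rw [edgesIn, Finset.filter_true_of_mem]
  intro e _ v _
  exact Finset.mem_univ v

lemma edgesIn_compl_add (A : Finset V) :
    edgesIn G Aᶜ + ∑ v ∈ A, G.degree v = G.edgeFinset.card + edgesIn G A := by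
  have hdeg : ∑ v ∈ A, G.degree v
      = ∑ e ∈ G.edgeFinset, (A.filter (fun v => v ∈ e)).card := by
    calc ∑ v ∈ A, G.degree v
        = ∑ v ∈ A, (G.edgeFinset.filter (fun e => v ∈ e)).card := by
          refine Finset.sum_congr rfl fun v _ => ?_
          rw [← SimpleGraph.card_incidenceFinset_eq_degree, SimpleGraph.incidenceFinset_eq_filter]
      _ = ∑ e ∈ G.edgeFinset, (A.filter (fun v => v ∈ e)).card := by
          simp_rw [Finset.card_filter]
          exact Finset.sum_comm
  have hpt : ∀ e ∈ G.edgeFinset, (A.filter (fun v => v ∈ e)).card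
      = (if ∀ v ∈ e, v ∈ A then 1 else 0) + (if ∀ v ∈ e, v ∈ Aᶜ then 0 else 1) := by
    intro e he
    induction e with
    | _ a b =>
      have hadj : G.Adj a b := G.mem_edgeSet.mp (SimpleGraph.mem_edgeFinset.mp he)
      have hab : a ≠ b := hadj.ne
      have hco : (∀ v ∈ (s(a,b) : Sym2 V), v ∈ A) ↔ (a ∈ A ∧ b ∈ A) := by
        simp [Sym2.mem_iff, or_imp, forall_and, forall_eq, forall_eq']
      have hco' : (∀ v ∈ (s(a,b) : Sym2 V), v ∈ Aᶜ) ↔ (a ∉ A ∧ b ∉ A) := by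
        simp [Sym2.mem_iff, or_imp, forall_and, forall_eq, forall_eq']
      have hfe : A.filter (fun v => v ∈ (s(a,b) : Sym2 V))
          = ({a, b} : Finset V).filter (fun v => v ∈ A) := by
        ext x
        simp [Sym2.mem_iff, and_comm]
      have h2 : ({a, b} : Finset V).card = 2 := Finset.card_pair hab
      rw [hfe, Finset.filter_insert, Finset.filter_singleton]
      simp only [hco, hco']
      by_cases ha : a ∈ A <;> by_cases hb : b ∈ A <;> simp [ha, hb, h2]
  have hsum : ∑ e ∈ G.edgeFinset, (A.filter (fun v => v ∈ e)).card
      = edgesIn G A + (G.edgeFinset.card - edgesIn G Aᶜ) := by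
    rw [Finset.sum_congr rfl hpt, Finset.sum_add_distrib]
    have h1 : ∑ e ∈ G.edgeFinset, (if ∀ v ∈ e, v ∈ A then 1 else 0) = edgesIn G A := by
      rw [edgesIn, Finset.card_filter]
    have h2 : ∑ e ∈ G.edgeFinset, (if ∀ v ∈ e, v ∈ Aᶜ then 0 else 1)
        = G.edgeFinset.card - edgesIn G Aᶜ := by
      have h3 := Finset.card_filter_add_card_filter_not
        (s := G.edgeFinset) (p := fun e => ∀ v ∈ e, v ∈ Aᶜ)
      have h4 : ∑ e ∈ G.edgeFinset, (if ∀ v ∈ e, v ∈ Aᶜ then 0 else 1)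
          = (G.edgeFinset.filter (fun e => ¬ ∀ v ∈ e, v ∈ Aᶜ)).card := by
        rw [Finset.card_filter]
        refine Finset.sum_congr rfl fun e _ => ?_
        by_cases h : ∀ v ∈ e, v ∈ Aᶜ
        · rw [if_pos h, if_neg (not_not_intro h)]
        · rw [if_neg h, if_pos h]
      rw [h4, edgesIn]
      omega
    rw [h1, h2]
  have hle := edgesIn_le_card G Aᶜ
  rw [hdeg, hsum]
  have : edgesIn G Aᶜ ≤ G.edgeFinset.card := hle
  omega

lemma le_maxEdgesIn (A : Finset V) : edgesIn G A ≤ maxEdgesIn G A.card :=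
  Finset.le_sup (Finset.mem_powersetCard.mpr ⟨Finset.subset_univ A, rfl⟩)

lemma maxEdgesIn_le {m B : ℕ} (h : ∀ A : Finset V, A.card = m → edgesIn G A ≤ B) :
    maxEdgesIn G m ≤ B :=
  Finset.sup_le fun A hA => h A (Finset.mem_powersetCard.mp hA).2

lemma exists_maxEdgesIn {m : ℕ} (hm : m ≤ Fintype.card V) :
    ∃ A : Finset V, A.card = m ∧ edgesIn G A = maxEdgesIn G m := by
  obtain ⟨A, hA, hEq⟩ := Finset.exists_mem_eq_sup _
    (show (Finset.univ.powersetCard m : Finset (Finset V)).Nonempty from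
      Finset.powersetCard_nonempty.mpr (by rw [Finset.card_univ]; exact hm)) (edgesIn G)
  exact ⟨A, (Finset.mem_powersetCard.mp hA).2, hEq.symm⟩

lemma maxEdgesIn_zero : maxEdgesIn G 0 = 0 :=
  Nat.le_zero.mp (maxEdgesIn_le G fun A hA => by
    rw [Finset.card_eq_zero.mp hA, edgesIn_empty])

lemma maxEdgesIn_one : maxEdgesIn G 1 = 0 :=
  Nat.le_zero.mp (maxEdgesIn_le G fun A hA => by
    obtain ⟨v, rfl⟩ := Finset.card_eq_one.mp hA
    rw [edgesIn_singleton])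

lemma maxEdgesIn_card : maxEdgesIn G (Fintype.card V) = G.edgeFinset.card := by
  refine le_antisymm (maxEdgesIn_le G fun A _ => edgesIn_le_card G A) ?_
  have := le_maxEdgesIn G (Finset.univ : Finset V)
  rwa [edgesIn_univ, Finset.card_univ] at this

end Aux

lemma regular_identity {V : Type*} [Fintype V] (G : SimpleGraph V) {d : ℕ}
    (hreg : G.IsRegularOfDegree d) {m : ℕ} (hm : m ≤ Fintype.card V) :
    G.edgeFinset.card + maxEdgesIn G m = maxEdgesIn G (Fintype.card V - m) + d * m := by
  have hdn : d * Fintype.card V = 2 * G.edgeFinset.card := by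
    rw [← G.sum_degrees_eq_twice_card_edges,
      Finset.sum_congr rfl fun v _ => hreg v, Finset.sum_const, Finset.card_univ, smul_eq_mul,
      mul_comm]
  have hsplit : d * m + d * (Fintype.card V - m) = d * Fintype.card V := by
    rw [← Nat.mul_add]
    congr 1
    omega
  have h1 : G.edgeFinset.card + maxEdgesIn G m
      ≤ maxEdgesIn G (Fintype.card V - m) + d * m := by
    obtain ⟨A, hAcard, hAmax⟩ := exists_maxEdgesIn G hm
    have hc := edgesIn_compl_add G A
    have hdegA : ∑ v ∈ A, G.degree v = d * m := by
      rw [Finset.sum_congr rfl fun v _ => hreg v, Finset.sum_const, smul_eq_mul, hAcard, mul_comm]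
    have hcompl : Aᶜ.card = Fintype.card V - m := by rw [Finset.card_compl, hAcard]
    have hle := le_maxEdgesIn G Aᶜ
    rw [hcompl] at hle
    omega
  have h2 : G.edgeFinset.card + maxEdgesIn G (Fintype.card V - m)
      ≤ maxEdgesIn G m + d * (Fintype.card V - m) := by
    obtain ⟨B, hBcard, hBmax⟩ := exists_maxEdgesIn G (Nat.sub_le (Fintype.card V) m)
    have hc := edgesIn_compl_add G B
    have hdegB : ∑ v ∈ B, G.degree v = d * (Fintype.card V - m) := by
      rw [Finset.sum_congr rfl fun v _ => hreg v, Finset.sum_const, smul_eq_mul, hBcard, mul_comm]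
    have hcompl : Bᶜ.card = m := by rw [Finset.card_compl, hBcard]; omega
    have hle := le_maxEdgesIn G Bᶜ
    rw [hcompl] at hle
    omega
  omega


/-- Bonnet–Sykora.  The `δ`-sequence of `G` is symmetric,
i.e. `δ_G(i) + δ_G(|V| - i + 1) = δ_G(|V|)` for all `i ∈ {1, …, |V|}`, if and
only if `G` is regular. -/
theorem stmt_11 {V : Type*} [Fintype V] (G : SimpleGraph V) :
    (∀ i, 1 ≤ i → i ≤ Fintype.card V →
      deltaSeq G i + deltaSeq G (Fintype.card V - i + 1) = deltaSeq G (Fintype.card V)) ↔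
    (∃ n, G.IsRegularOfDegree n) := by
  constructor
  · -- symmetric → regular
    intro hsym
    by_cases hn : Fintype.card V = 0
    · exact ⟨0, fun v => ((Fintype.card_eq_zero_iff.mp hn).false v).elim⟩
    have hn1 : 1 ≤ Fintype.card V := by omega
    obtain ⟨w⟩ : Nonempty V := Fintype.card_pos_iff.mp (by omega)
    obtain ⟨v0, -, hv0⟩ := Finset.exists_min_image (Finset.univ : Finset V) (fun v => G.degree v) ⟨w, Finset.mem_univ w⟩
    -- edges in complement of a single vertex
    have hvE : ∀ v : V, edgesIn G ({v}ᶜ : Finset V) + G.degree v = G.edgeFinset.card := by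
      intro v
      have hc := edgesIn_compl_add G {v}
      rw [Finset.sum_singleton, edgesIn_singleton] at hc
      omega
    -- maxEdgesIn at n - 1
    have hIn1 : maxEdgesIn G (Fintype.card V - 1) + G.degree v0 = G.edgeFinset.card := by
      have hge : G.edgeFinset.card - G.degree v0 ≤ maxEdgesIn G (Fintype.card V - 1) := by
        have hcard : ({v0}ᶜ : Finset V).card = Fintype.card V - 1 := by
          rw [Finset.card_compl, Finset.card_singleton]
        have := le_maxEdgesIn G ({v0}ᶜ : Finset V)
        rw [hcard] at this
        have := hvE v0
        omega
      have hle : maxEdgesIn G (Fintype.card V - 1) ≤ G.edgeFinset.card - G.degree v0 := by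
        refine maxEdgesIn_le G fun A hA => ?_
        have hcc : (Aᶜ : Finset V).card = 1 := by
          rw [Finset.card_compl, hA]
          omega
        obtain ⟨v, hv⟩ := Finset.card_eq_one.mp hcc
        have hAv : A = ({v}ᶜ : Finset V) := by rw [← hv, compl_compl]
        have h1 := hvE v
        have h2 := hv0 v (Finset.mem_univ v)
        rw [hAv]
        omega
      have := hvE v0
      omega
    have hIN : maxEdgesIn G (Fintype.card V) = G.edgeFinset.card := maxEdgesIn_card G
    -- delta at n equals min degree
    have hdel : deltaSeq G (Fintype.card V) = (G.degree v0 : ℤ) := by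
      simp only [deltaSeq]
      omega
    -- telescoping and summation of the symmetry hypothesis
    have htel : ∑ i ∈ Finset.range (Fintype.card V), deltaSeq G (i + 1)
        = (G.edgeFinset.card : ℤ) := by
      have h := Finset.sum_range_sub (fun i => (maxEdgesIn G i : ℤ)) (Fintype.card V)
      have h0 : maxEdgesIn G 0 = 0 := maxEdgesIn_zero G
      calc ∑ i ∈ Finset.range (Fintype.card V), deltaSeq G (i + 1)
          = ∑ i ∈ Finset.range (Fintype.card V),
              ((maxEdgesIn G (i + 1) : ℤ) - (maxEdgesIn G i : ℤ)) := by
            refine Finset.sum_congr rfl fun i _ => ?_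
            simp [deltaSeq]
        _ = (maxEdgesIn G (Fintype.card V) : ℤ) - (maxEdgesIn G 0 : ℤ) := h
        _ = (G.edgeFinset.card : ℤ) := by rw [hIN, h0]; ring
    have hrefl : ∑ i ∈ Finset.range (Fintype.card V), deltaSeq G (Fintype.card V - i)
        = ∑ i ∈ Finset.range (Fintype.card V), deltaSeq G (i + 1) := by
      calc ∑ i ∈ Finset.range (Fintype.card V), deltaSeq G (Fintype.card V - i)
          = ∑ i ∈ Finset.range (Fintype.card V),
              deltaSeq G (Fintype.card V - (Fintype.card V - 1 - i)) :=
            (Finset.sum_range_reflect (fun i => deltaSeq G (Fintype.card V - i)) _).symm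
        _ = ∑ i ∈ Finset.range (Fintype.card V), deltaSeq G (i + 1) := by
            refine Finset.sum_congr rfl fun i hi => ?_
            rw [Finset.mem_range] at hi
            congr 1
            omega
    have hkey : 2 * (G.edgeFinset.card : ℤ)
        = (Fintype.card V : ℤ) * deltaSeq G (Fintype.card V) := by
      have hsum : ∑ i ∈ Finset.range (Fintype.card V),
          (deltaSeq G (i + 1) + deltaSeq G (Fintype.card V - i))
          = (Fintype.card V : ℤ) * deltaSeq G (Fintype.card V) := by
        rw [Finset.sum_congr rfl fun i hi => ?_, Finset.sum_const, Finset.card_range,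
          nsmul_eq_mul]
        rw [Finset.mem_range] at hi
        have h := hsym (i + 1) (by omega) (by omega)
        rwa [show Fintype.card V - (i + 1) + 1 = Fintype.card V - i from by omega] at h
      rw [Finset.sum_add_distrib, hrefl, htel] at hsum
      linarith [hsum]
    rw [hdel] at hkey
    have h2E : 2 * G.edgeFinset.card = Fintype.card V * G.degree v0 := by exact_mod_cast hkey
    refine ⟨G.degree v0, fun v => ?_⟩
    by_contra hnev
    have hlt : G.degree v0 < G.degree v := lt_of_le_of_ne (hv0 v (Finset.mem_univ v)) (Ne.symm hnev)
    have hstrict : ∑ _u : V, G.degree v0 < ∑ u : V, G.degree u :=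
      Finset.sum_lt_sum (fun u _ => hv0 u (Finset.mem_univ u)) ⟨v, Finset.mem_univ v, hlt⟩
    rw [Finset.sum_const, Finset.card_univ, smul_eq_mul,
      G.sum_degrees_eq_twice_card_edges] at hstrict
    omega
  · -- regular → symmetric
    rintro ⟨d, hreg⟩ i hi1 hi2
    have e1 := regular_identity G hreg hi2
    have e2 := regular_identity G hreg (show i - 1 ≤ Fintype.card V by omega)
    have e3 := regular_identity G hreg (le_refl (Fintype.card V))
    have e4 := regular_identity G hreg (Nat.sub_le (Fintype.card V) 1)
    rw [show Fintype.card V - (i - 1) = Fintype.card V - i + 1 from by omega] at e2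
    rw [Nat.sub_self] at e3
    rw [show Fintype.card V - (Fintype.card V - 1) = 1 from by omega] at e4
    have h0 := maxEdgesIn_zero G
    have h1 := maxEdgesIn_one G
    simp only [deltaSeq]
    rw [show Fintype.card V - i + 1 - 1 = Fintype.card V - i from by omega]
    have hd : d * (i - 1) + d = d * i := by
      rw [← Nat.mul_succ]
      congr 1
      omega
    have hd2 : d * (Fintype.card V - 1) + d = d * Fintype.card V := by
      rw [← Nat.mul_succ]
      congr 1
      omega
    omega
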